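/- Fix ℓ, k, s ∈ N and ε, η, L ≥ 0. Let A_1,…,A_s, U_1,…,U_s ∈ R^{ℓ×k} be matrices such that for all i: colspan(A_i) = colspan(U_i), ‖A_i‖ ≤ L (spectral norm), and σ_min(U_i) ≥ η. Assume also σ_min([A_1 | … | A_s]) ≥ ε. Then σ_min([U_1 | … | U_s]) ≥ η·ε/L. -/

import Mathlib

open MeasureTheory ProbabilityTheory Matrix BigOperators

noncomputable section

/-- Euclidean norm of a finitely indexed real vector. -/
def enorm2 {ι : Type*} [Fintype ι] (x : ι → ℝ) : ℝ :=
  Real.sqrt (∑ i, x i ^ 2)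

/-- `sval A k`: the `k`-th largest singular value of `A` (Courant–Fischer min–max);
`sval A 1` is the spectral norm. -/
def sval {ι κ : Type*} [Fintype ι] [Fintype κ] (A : Matrix ι κ ℝ) (k : ℕ) : ℝ :=
  ⨆ V : {V : Submodule ℝ (κ → ℝ) // Module.finrank ℝ V = k},
    ⨅ x : {x : κ → ℝ // x ∈ V.1 ∧ enorm2 x = 1}, enorm2 (A.mulVec x.1)

/-- Frobenius norm. -/
def frobNorm {ι κ : Type*} [Fintype ι] [Fintype κ] (A : Matrix ι κ ℝ) : ℝ :=
  Real.sqrt (∑ i, ∑ j, A i j ^ 2)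

/-- The law of a vector with i.i.d. `N(0, ρ²)` coordinates. -/
def vecGauss (ι : Type*) [Fintype ι] (ρ : ℝ) : Measure (ι → ℝ) :=
  Measure.pi fun _ => gaussianReal 0 (ρ ^ 2).toNNReal

instance vecGauss.instIsProbabilityMeasure (ι : Type*) [Fintype ι] (ρ : ℝ) :
    IsProbabilityMeasure (vecGauss ι ρ) := by
  unfold vecGauss; infer_instance

/-- The law of an `ι × κ` matrix (as a function) with i.i.d. `N(0, ρ²)` entries. -/
def matGauss (ι κ : Type*) [Fintype ι] [Fintype κ] (ρ : ℝ) : Measure (ι → κ → ℝ) :=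
  Measure.pi fun _ => vecGauss κ ρ

instance matGauss.instIsProbabilityMeasure (ι κ : Type*) [Fintype ι] [Fintype κ] (ρ : ℝ) :
    IsProbabilityMeasure (matGauss ι κ ρ) := by
  unfold matGauss; infer_instance

/-- Monotone tuples, used to index the columns of symmetrized Kronecker powers. -/
noncomputable instance instFintypeMonoTuples (d m : ℕ) :
    Fintype {f : Fin d → Fin m // Monotone f} :=
  Fintype.ofFinite _

/-- Orthogonal projector of `(ℝⁿ)^{⊗ d}` onto the subspace of symmetric tensors. -/
def symProj (n d : ℕ) : Matrix (Fin d → Fin n) (Fin d → Fin n) ℝ :=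
  fun r c => (1 / (Nat.factorial d : ℝ)) *
    ∑ π : Equiv.Perm (Fin d), if r = c ∘ π then 1 else 0

/-- Symmetrized `d`-th Kronecker power `U^{⊛ d}`: the column indexed by a monotone
tuple `i₁ ≤ … ≤ i_d` is `(1/d!) ∑_π u_{i_{π(1)}} ⊗ ⋯ ⊗ u_{i_{π(d)}}`. -/
def symKronPow {n m : ℕ} (U : Matrix (Fin n) (Fin m) ℝ) (d : ℕ) :
    Matrix (Fin d → Fin n) {f : Fin d → Fin m // Monotone f} ℝ :=
  fun r c => (1 / (Nat.factorial d : ℝ)) *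
    ∑ π : Equiv.Perm (Fin d), ∏ j, U (r j) (c.1 (π j))

/-- Kronecker product of `d` matrices, rows/columns indexed by tuples. -/
def kronCols {n m : ℕ} (d : ℕ) (Us : Fin d → Matrix (Fin n) (Fin m) ℝ) :
    Matrix (Fin d → Fin n) (Fin d → Fin m) ℝ :=
  fun r c => ∏ j, Us j (r j) (c j)

/-- The symmetrizing selector matrix `Perm_avg`. -/
def permAvg (d m : ℕ) : Matrix (Fin d → Fin m) {f : Fin d → Fin m // Monotone f} ℝ :=
  fun g c => (1 / (Nat.factorial d : ℝ)) *
    ∑ π : Equiv.Perm (Fin d), if g = c.1 ∘ π then 1 else 0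

/-- `P` is the symmetric idempotent matrix with kernel exactly `W`, i.e. the
orthogonal projection onto the orthogonal complement of `W`. -/
def IsOrthProjKer {ι : Type*} [Fintype ι] (P : Matrix ι ι ℝ) (W : Submodule ℝ (ι → ℝ)) : Prop :=
  Pᵀ = P ∧ P * P = P ∧ ∀ v : ι → ℝ, P.mulVec v = 0 ↔ v ∈ W

/-- Column span of a matrix. -/
def colSpan {ι κ : Type*} (A : Matrix ι κ ℝ) : Submodule ℝ (ι → ℝ) :=
  Submodule.span ℝ (Set.range fun j => fun i => A i j)

/-- Horizontal concatenation of a family of matrices. -/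
def hcat {ι κ₁ κ₂ : Type*} (M : κ₁ → Matrix ι κ₂ ℝ) : Matrix ι (κ₁ × κ₂) ℝ :=
  fun r c => M c.1 r c.2



section Statement17Helpers

variable {ι κ : Type*} [Fintype ι] [Fintype κ]

lemma enorm2_nonneg (x : κ → ℝ) : 0 ≤ enorm2 x := Real.sqrt_nonneg _

lemma sq_enorm2 (x : κ → ℝ) : enorm2 x ^ 2 = ∑ i, x i ^ 2 := by
  rw [enorm2, Real.sq_sqrt (Finset.sum_nonneg fun i _ => sq_nonneg _)]

lemma enorm2_smul (c : ℝ) (x : κ → ℝ) : enorm2 (c • x) = |c| * enorm2 x := by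
  unfold enorm2
  have : ∑ i, (c • x) i ^ 2 = c ^ 2 * ∑ i, x i ^ 2 := by
    rw [Finset.mul_sum]; congr 1; ext i; simp [mul_pow]
  rw [this, Real.sqrt_mul (sq_nonneg c), Real.sqrt_sq_eq_abs]

lemma enorm2_pos {z : κ → ℝ} (hz : z ≠ 0) : 0 < enorm2 z := by
  rcases (enorm2_nonneg z).lt_or_eq with h | h
  · exact h
  · exfalso; apply hz
    have h0 := h.symm
    rw [enorm2, Real.sqrt_eq_zero (Finset.sum_nonneg fun i _ => sq_nonneg _)] at h0
    funext i
    have hi : z i ^ 2 = 0 :=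
      (Finset.sum_eq_zero_iff_of_nonneg (fun i _ => sq_nonneg (z i))).mp h0 i
        (Finset.mem_univ i)
    exact pow_eq_zero_iff (n := 2) (by norm_num) |>.mp hi

lemma enorm2_unit_smul {z : κ → ℝ} (hz : z ≠ 0) :
    enorm2 ((enorm2 z)⁻¹ • z) = 1 := by
  rw [enorm2_smul, abs_of_nonneg (inv_nonneg.mpr (enorm2_nonneg z)),
    inv_mul_cancel₀ (enorm2_pos hz).ne']

lemma frobNorm_nonneg (A : Matrix ι κ ℝ) : 0 ≤ frobNorm A := Real.sqrt_nonneg _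

lemma enorm2_mulVec_le (A : Matrix ι κ ℝ) (x : κ → ℝ) :
    enorm2 (A.mulVec x) ≤ frobNorm A * enorm2 x := by
  have key : ∑ i, (A.mulVec x) i ^ 2 ≤ (∑ i, ∑ j, A i j ^ 2) * ∑ j, x j ^ 2 := by
    rw [Finset.sum_mul]
    refine Finset.sum_le_sum fun i _ => ?_
    exact Finset.sum_mul_sq_le_sq_mul_sq Finset.univ (fun j => A i j) x
  calc enorm2 (A.mulVec x) ≤ Real.sqrt ((∑ i, ∑ j, A i j ^ 2) * ∑ j, x j ^ 2) :=
        Real.sqrt_le_sqrt key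
    _ = frobNorm A * enorm2 x := by
        exact Real.sqrt_mul (Finset.sum_nonneg fun i _ =>
          Finset.sum_nonneg fun j _ => sq_nonneg (A i j)) _

/-- The infimum in the definition of `sval` is nonnegative. -/
lemma sval_inner_nonneg (A : Matrix ι κ ℝ)
    (V : Submodule ℝ (κ → ℝ)) :
    0 ≤ ⨅ x : {x : κ → ℝ // x ∈ V ∧ enorm2 x = 1}, enorm2 (A.mulVec x.1) :=
  Real.iInf_nonneg fun x => enorm2_nonneg _

lemma sval_nonneg (A : Matrix ι κ ℝ) (n : ℕ) : 0 ≤ sval A n :=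
  Real.iSup_nonneg fun V => sval_inner_nonneg A V.1

lemma sval_inner_le_frob (A : Matrix ι κ ℝ) (V : Submodule ℝ (κ → ℝ)) :
    (⨅ x : {x : κ → ℝ // x ∈ V ∧ enorm2 x = 1}, enorm2 (A.mulVec x.1)) ≤ frobNorm A := by
  rcases isEmpty_or_nonempty {x : κ → ℝ // x ∈ V ∧ enorm2 x = 1} with h | h
  · rw [Real.iInf_of_isEmpty]; exact frobNorm_nonneg A
  · obtain ⟨x₀⟩ := h
    refine le_trans (ciInf_le ⟨0, fun a ⟨x, hx⟩ => hx ▸ enorm2_nonneg _⟩ x₀) ?_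
    calc enorm2 (A.mulVec x₀.1) ≤ frobNorm A * enorm2 x₀.1 := enorm2_mulVec_le A x₀.1
      _ = frobNorm A := by rw [x₀.2.2, mul_one]

/-- When `n` is the dimension of the whole space, the sup in `sval` collapses. -/
lemma sval_eq_inf_top (A : Matrix ι κ ℝ) (n : ℕ)
    (h : Module.finrank ℝ (κ → ℝ) = n) :
    sval A n = ⨅ x : {x : κ → ℝ // x ∈ (⊤ : Submodule ℝ (κ → ℝ)) ∧ enorm2 x = 1},
      enorm2 (A.mulVec x.1) := by
  have htop : Module.finrank ℝ (⊤ : Submodule ℝ (κ → ℝ)) = n := by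
    rw [finrank_top]; exact h
  have key : ∀ V : {V : Submodule ℝ (κ → ℝ) // Module.finrank ℝ V = n},
      V = (⟨⊤, htop⟩ : {V : Submodule ℝ (κ → ℝ) // Module.finrank ℝ V = n}) := by
    intro V
    exact Subtype.ext (Submodule.eq_top_of_finrank_eq (by rw [V.2, h]))
  unfold sval
  have : ∀ V : {V : Submodule ℝ (κ → ℝ) // Module.finrank ℝ V = n},
      (⨅ x : {x : κ → ℝ // x ∈ V.1 ∧ enorm2 x = 1}, enorm2 (A.mulVec x.1))
      = ⨅ x : {x : κ → ℝ // x ∈ (⊤ : Submodule ℝ (κ → ℝ)) ∧ enorm2 x = 1},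
          enorm2 (A.mulVec x.1) := by
    intro V; rw [key V]
  calc (⨆ V : {V : Submodule ℝ (κ → ℝ) // Module.finrank ℝ V = n},
      ⨅ x : {x : κ → ℝ // x ∈ V.1 ∧ enorm2 x = 1}, enorm2 (A.mulVec x.1))
      = ⨆ _ : {V : Submodule ℝ (κ → ℝ) // Module.finrank ℝ V = n},
        ⨅ x : {x : κ → ℝ // x ∈ (⊤ : Submodule ℝ (κ → ℝ)) ∧ enorm2 x = 1},
          enorm2 (A.mulVec x.1) := by
        exact iSup_congr this
    _ = _ := @ciSup_const _ _ _ ⟨⟨⊤, htop⟩⟩ _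

set_option maxHeartbeats 1000000 in
/-- Lower bound on `‖A z‖` coming from the least singular value (full-dimension case). -/
lemma le_enorm2_mulVec_of_sval (A : Matrix ι κ ℝ) {η : ℝ} (n : ℕ)
    (hd : Module.finrank ℝ (κ → ℝ) = n) (hη : η ≤ sval A n) (z : κ → ℝ) :
    η * enorm2 z ≤ enorm2 (A.mulVec z) := by
  rw [sval_eq_inf_top A n hd] at hη
  by_cases hz : z = 0
  · subst hz
    have h0 : enorm2 (0 : κ → ℝ) = 0 := by simp [enorm2]
    rw [Matrix.mulVec_zero, h0, mul_zero]
    simp [enorm2]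
  · have hzn := enorm2_pos hz
    have hx : ((enorm2 z)⁻¹ • z) ∈ (⊤ : Submodule ℝ (κ → ℝ)) ∧
        enorm2 ((enorm2 z)⁻¹ • z) = 1 := ⟨Submodule.mem_top, enorm2_unit_smul hz⟩
    have hbdd : BddBelow (Set.range fun x : {x : κ → ℝ // x ∈ (⊤ : Submodule ℝ (κ → ℝ)) ∧
        enorm2 x = 1} => enorm2 (A.mulVec x.1)) := by
      refine ⟨0, ?_⟩
      rintro a ⟨x, rfl⟩
      exact enorm2_nonneg _
    have h1 : η ≤ enorm2 (A.mulVec ((enorm2 z)⁻¹ • z)) :=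
      hη.trans (ciInf_le hbdd ⟨(enorm2 z)⁻¹ • z, hx⟩)
    rw [Matrix.mulVec_smul, enorm2_smul,
      abs_of_nonneg (inv_nonneg.mpr (enorm2_nonneg z))] at h1
    calc η * enorm2 z ≤ ((enorm2 z)⁻¹ * enorm2 (A.mulVec z)) * enorm2 z :=
          mul_le_mul_of_nonneg_right h1 (enorm2_nonneg z)
      _ = enorm2 (A.mulVec z) := by field_simp

/-- Spectral norm bound: `sval A 1 ≤ L` implies `‖A x‖ ≤ L ‖x‖`. -/
lemma enorm2_mulVec_le_of_sval_one (A : Matrix ι κ ℝ) {L : ℝ}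
    (hL : sval A 1 ≤ L) (z : κ → ℝ) : enorm2 (A.mulVec z) ≤ L * enorm2 z := by
  by_cases hz : z = 0
  · subst hz
    have h0 : enorm2 (0 : κ → ℝ) = 0 := by simp [enorm2]
    rw [Matrix.mulVec_zero, h0, mul_zero]
    simp [enorm2]
  · have hzn : 0 < enorm2 z := by
      rcases (enorm2_nonneg z).lt_or_eq with h | h
      · exact h
      · exfalso; apply hz
        have := h.symm
        rw [enorm2, Real.sqrt_eq_zero (Finset.sum_nonneg fun i _ => sq_nonneg _)] at this
        funext i
        have hi : z i ^ 2 = 0 := by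
          have := (Finset.sum_eq_zero_iff_of_nonneg
            (fun i _ => sq_nonneg (z i))).mp this i (Finset.mem_univ i)
          exact this
        exact pow_eq_zero_iff (n := 2) (by norm_num) |>.mp hi
    set V : Submodule ℝ (κ → ℝ) := ℝ ∙ z with hV
    have hVr : Module.finrank ℝ V = 1 := finrank_span_singleton hz
    -- every unit vector in V gives the same value
    have hval : ∀ x : {x : κ → ℝ // x ∈ V ∧ enorm2 x = 1},
        enorm2 (A.mulVec x.1) = enorm2 (A.mulVec z) / enorm2 z := by
      rintro ⟨x, hxV, hx1⟩
      obtain ⟨c, rfl⟩ := Submodule.mem_span_singleton.mp hxV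
      have h1 : |c| * enorm2 z = 1 := by rw [← enorm2_smul]; exact hx1
      have : A.mulVec (c • z) = c • A.mulVec z := Matrix.mulVec_smul A c z
      rw [this, enorm2_smul]
      have hc : |c| = (enorm2 z)⁻¹ := eq_inv_of_mul_eq_one_left h1
      rw [hc, inv_mul_eq_div]
    have hne : Nonempty {x : κ → ℝ // x ∈ V ∧ enorm2 x = 1} := by
      refine ⟨⟨(enorm2 z)⁻¹ • z, ?_, ?_⟩⟩
      · exact Submodule.smul_mem _ _ (Submodule.mem_span_singleton_self z)
      · rw [enorm2_smul, abs_of_nonneg (inv_nonneg.mpr (enorm2_nonneg z))]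
        field_simp
    have hinf : (⨅ x : {x : κ → ℝ // x ∈ V ∧ enorm2 x = 1},
        enorm2 (A.mulVec x.1)) = enorm2 (A.mulVec z) / enorm2 z := by
      calc (⨅ x : {x : κ → ℝ // x ∈ V ∧ enorm2 x = 1}, enorm2 (A.mulVec x.1))
          = ⨅ _ : {x : κ → ℝ // x ∈ V ∧ enorm2 x = 1},
              enorm2 (A.mulVec z) / enorm2 z := iInf_congr hval
        _ = _ := @ciInf_const _ _ _ hne _
    have hbdd : BddAbove (Set.range fun V : {V : Submodule ℝ (κ → ℝ) //
        Module.finrank ℝ V = 1} =>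
        ⨅ x : {x : κ → ℝ // x ∈ V.1 ∧ enorm2 x = 1}, enorm2 (A.mulVec x.1)) := by
      refine ⟨frobNorm A, ?_⟩
      rintro a ⟨W, rfl⟩
      exact sval_inner_le_frob A W.1
    have hle : enorm2 (A.mulVec z) / enorm2 z ≤ sval A 1 := by
      rw [← hinf]
      exact le_ciSup hbdd (⟨V, hVr⟩ : {V : Submodule ℝ (κ → ℝ) // Module.finrank ℝ V = 1})
    have := hle.trans hL
    rw [div_le_iff₀ hzn] at this
    linarith [this]

lemma hcat_mulVec {ι κ₁ κ₂ : Type*} [Fintype ι] [Fintype κ₁] [Fintype κ₂]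
    (M : κ₁ → Matrix ι κ₂ ℝ) (v : κ₁ × κ₂ → ℝ) (r : ι) :
    (hcat M).mulVec v r = ∑ i, ∑ j, M i r j * v (i, j) := by
  simp [hcat, Matrix.mulVec, dotProduct, Fintype.sum_prod_type]

end Statement17Helpers

set_option maxHeartbeats 1000000 in
/-- change-of-basis bound for block matrices.
If `colspan(A_i) = colspan(U_i)`, `‖A_i‖ ≤ L`, `σ_min(U_i) ≥ η` for all `i`, and
`σ_min([A_1 | … | A_s]) ≥ ε`, then `σ_min([U_1 | … | U_s]) ≥ η·ε/L`. -/
theorem statement17 {l k s : ℕ} (ε η L : ℝ) (hε : 0 ≤ ε) (hη : 0 ≤ η) (hL : 0 ≤ L)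
    (A U : Fin s → Matrix (Fin l) (Fin k) ℝ)
    (hspan : ∀ i, colSpan (A i) = colSpan (U i))
    (hA : ∀ i, sval (A i) 1 ≤ L)
    (hU : ∀ i, η ≤ sval (U i) k)
    (hAs : ε ≤ sval (hcat A) (s * k)) :
    η * ε / L ≤ sval (hcat U) (s * k) := by
  rcases hL.lt_or_eq with hLpos | hL0
  swap
  · rw [← hL0, div_zero]; exact sval_nonneg _ _
  rcases hη.lt_or_eq with hηpos | hη0
  swap
  · rw [← hη0, zero_mul, zero_div]; exact sval_nonneg _ _
  rcases hε.lt_or_eq with hεpos | hε0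
  swap
  · rw [← hε0, mul_zero, zero_div]; exact sval_nonneg _ _
  have hdim : Module.finrank ℝ (Fin s × Fin k → ℝ) = s * k := by
    rw [Module.finrank_pi, Fintype.card_prod, Fintype.card_fin, Fintype.card_fin]
  have hdimk : Module.finrank ℝ (Fin k → ℝ) = k := by
    rw [Module.finrank_pi, Fintype.card_fin]
  -- construct change-of-basis matrices N i with U i = A i * N i
  have hN : ∀ i, ∃ N : Matrix (Fin k) (Fin k) ℝ, U i = A i * N := by
    intro i
    have hcol : ∀ j, (fun r => U i r j) ∈ colSpan (A i) := by
      intro j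
      rw [hspan i]
      exact Submodule.subset_span ⟨j, rfl⟩
    choose c hc using fun j => (Submodule.mem_span_range_iff_exists_fun ℝ).mp (hcol j)
    refine ⟨fun m j => c j m, ?_⟩
    ext r j
    have h := congrFun (hc j) r
    simp only [Finset.sum_apply, Pi.smul_apply, smul_eq_mul] at h
    rw [← h]; show _ = ∑ m, A i r m * c j m
    exact Finset.sum_congr rfl fun m _ => mul_comm _ _
  choose N hNdef using hN
  -- per-block lower bound for N i
  have hblock : ∀ i (z : Fin k → ℝ),
      (η / L) * enorm2 z ≤ enorm2 ((N i).mulVec z) := by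
    intro i z
    have h1 : η * enorm2 z ≤ enorm2 ((U i).mulVec z) :=
      le_enorm2_mulVec_of_sval (U i) k hdimk (hU i) z
    have h2 : (U i).mulVec z = (A i).mulVec ((N i).mulVec z) := by
      rw [hNdef i, ← Matrix.mulVec_mulVec]
    have h3 : enorm2 ((A i).mulVec ((N i).mulVec z)) ≤ L * enorm2 ((N i).mulVec z) :=
      enorm2_mulVec_le_of_sval_one (A i) (hA i) ((N i).mulVec z)
    rw [h2] at h1
    rw [div_mul_eq_mul_div, div_le_iff₀ hLpos]
    calc η * enorm2 z ≤ L * enorm2 ((N i).mulVec z) := h1.trans h3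
      _ = enorm2 ((N i).mulVec z) * L := mul_comm _ _
  -- pointwise lower bound from hAs
  have hAp : ∀ y : Fin s × Fin k → ℝ,
      ε * enorm2 y ≤ enorm2 ((hcat A).mulVec y) :=
    le_enorm2_mulVec_of_sval (hcat A) (s * k) hdim hAs
  rw [sval_eq_inf_top (hcat U) (s * k) hdim]
  rcases isEmpty_or_nonempty
      {x : Fin s × Fin k → ℝ // x ∈ (⊤ : Submodule ℝ (Fin s × Fin k → ℝ)) ∧
        enorm2 x = 1} with hemp | hne
  · exfalso
    rw [sval_eq_inf_top (hcat A) (s * k) hdim, Real.iInf_of_isEmpty] at hAs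
    linarith
  refine le_ciInf ?_
  rintro ⟨x, -, hx1⟩
  -- define the auxiliary vector y
  set y : Fin s × Fin k → ℝ :=
    fun p => (N p.1).mulVec (fun j => x (p.1, j)) p.2 with hy
  have hsum_x : ∑ p : Fin s × Fin k, x p ^ 2 = 1 := by
    have := sq_enorm2 x
    rw [hx1, one_pow] at this
    exact this.symm
  -- Key 1: (hcat A).mulVec y = (hcat U).mulVec x
  have key1 : (hcat A).mulVec y = (hcat U).mulVec x := by
    funext r
    rw [hcat_mulVec, hcat_mulVec]
    refine Finset.sum_congr rfl fun i _ => ?_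
    have hy2 : ∀ m, y (i, m) = ∑ j, N i m j * x (i, j) := by
      intro m
      simp [hy, Matrix.mulVec, dotProduct]
    calc ∑ m, A i r m * y (i, m)
        = ∑ m, ∑ j, A i r m * (N i m j * x (i, j)) := by
          refine Finset.sum_congr rfl fun m _ => ?_
          rw [hy2 m, Finset.mul_sum]
      _ = ∑ j, ∑ m, A i r m * (N i m j * x (i, j)) := Finset.sum_comm
      _ = ∑ j, U i r j * x (i, j) := by
          refine Finset.sum_congr rfl fun j _ => ?_
          rw [hNdef i, Matrix.mul_apply, Finset.sum_mul]
          exact Finset.sum_congr rfl fun m _ => by ring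
  -- Key 2: enorm2 y ≥ η / L
  have key2 : η / L ≤ enorm2 y := by
    have hterm : ∀ i : Fin s,
        (η / L) ^ 2 * ∑ j, x (i, j) ^ 2 ≤ ∑ m, y (i, m) ^ 2 := by
      intro i
      have h := hblock i (fun j => x (i, j))
      have hsq := mul_self_le_mul_self
        (mul_nonneg (by positivity) (enorm2_nonneg _)) h
      calc (η / L) ^ 2 * ∑ j, x (i, j) ^ 2
          = ((η / L) * enorm2 (fun j => x (i, j))) ^ 2 := by
            rw [mul_pow, sq_enorm2]
        _ ≤ enorm2 ((N i).mulVec (fun j => x (i, j))) ^ 2 := by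
            rw [sq, sq]; exact hsq
        _ = ∑ m, ((N i).mulVec (fun j => x (i, j))) m ^ 2 := sq_enorm2 _
        _ = ∑ m, y (i, m) ^ 2 := rfl
    have hsumy : (η / L) ^ 2 ≤ ∑ p : Fin s × Fin k, y p ^ 2 := by
      calc (η / L) ^ 2 = (η / L) ^ 2 * ∑ p : Fin s × Fin k, x p ^ 2 := by
            rw [hsum_x, mul_one]
        _ = ∑ i : Fin s, (η / L) ^ 2 * ∑ j, x (i, j) ^ 2 := by
            rw [Fintype.sum_prod_type, Finset.mul_sum]
        _ ≤ ∑ i : Fin s, ∑ m, y (i, m) ^ 2 := Finset.sum_le_sum fun i _ => hterm i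
        _ = ∑ p : Fin s × Fin k, y p ^ 2 :=
            (Fintype.sum_prod_type (fun p : Fin s × Fin k => y p ^ 2)).symm
    calc η / L = Real.sqrt ((η / L) ^ 2) :=
          (Real.sqrt_sq (by positivity)).symm
      _ ≤ Real.sqrt (∑ p : Fin s × Fin k, y p ^ 2) := Real.sqrt_le_sqrt hsumy
      _ = enorm2 y := rfl
  -- conclude
  have hfin : ε * (η / L) ≤ enorm2 ((hcat U).mulVec x) := by
    calc ε * (η / L) ≤ ε * enorm2 y :=
          mul_le_mul_of_nonneg_left key2 hε
      _ ≤ enorm2 ((hcat A).mulVec y) := hAp y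
      _ = enorm2 ((hcat U).mulVec x) := by rw [key1]
  calc η * ε / L = ε * (η / L) := by ring
    _ ≤ _ := hfin


end
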